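/- Fix d ≤ n and a conjugacy class C ⊆ S_d. For a uniformly random τ ∈ S_n, the expected number of subsets W ⊆ {1,…,n} of cardinality d such that τ(W) = W and the restriction τ|_W lies in C (under any bijection W ≅ {1,…,d}) equals |C| / d!; in particular it is independent of n for n ≥ d. -/

import Mathlib

private lemma perm_mem_iff {n : ℕ} (τ : Equiv.Perm (Fin n)) (W : Finset (Fin n))
    (h : ∀ i ∈ W, τ i ∈ W) : ∀ x, x ∈ W ↔ τ x ∈ W := by
  intro x
  constructor
  · exact h x
  · intro hx
    have himg : W.image τ = W := by
      apply Finset.eq_of_subset_of_card_le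
      · intro y hy
        simp only [Finset.mem_image] at hy
        obtain ⟨z, hz, rfl⟩ := hy
        exact h z hz
      · rw [Finset.card_image_of_injective _ τ.injective]
    have : τ x ∈ W.image τ := himg.symm ▸ hx
    simp only [Finset.mem_image] at this
    obtain ⟨z, hz, hzx⟩ := this
    rwa [← τ.injective hzx]

private lemma count_eq (d n : ℕ) (C : ConjClasses (Equiv.Perm (Fin d)))
    (W : Finset (Fin n)) (hW : W.card = d) :
    Nat.card {τ : Equiv.Perm (Fin n) // (∀ i ∈ W, τ i ∈ W) ∧
        ∃ β : Fin d ≃ {x // x ∈ W}, ∃ σ : Equiv.Perm (Fin d), σ ∈ C.carrier ∧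
          ∀ i : Fin d, τ (β i : Fin n) = (β (σ i) : Fin n)} =
      C.carrier.ncard * (n - d).factorial := by
  classical
  have hcard : Fintype.card {x : Fin n // x ∈ W} = d := by
    simp [Fintype.card_coe, hW]
  let β₀ : Fin d ≃ {x : Fin n // x ∈ W} := (Fintype.equivFinOfCardEq hcard).symm
  -- The map from (σ, π) to permutations of Fin n
  let Φ : C.carrier × Equiv.Perm {x : Fin n // ¬ x ∈ W} →
      {τ : Equiv.Perm (Fin n) // (∀ i ∈ W, τ i ∈ W) ∧
        ∃ β : Fin d ≃ {x // x ∈ W}, ∃ σ : Equiv.Perm (Fin d), σ ∈ C.carrier ∧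
          ∀ i : Fin d, τ (β i : Fin n) = (β (σ i) : Fin n)} :=
    fun x => ⟨Equiv.Perm.subtypeCongr (β₀.permCongr x.1.1) x.2, by
      constructor
      · intro i hi
        rw [Equiv.Perm.subtypeCongr.left_apply _ _ hi]
        exact (β₀.permCongr x.1.1 ⟨i, hi⟩).2
      · refine ⟨β₀, x.1.1, x.1.2, fun i => ?_⟩
        rw [Equiv.Perm.subtypeCongr.left_apply _ _ (β₀ i).2]
        simp⟩
  have hbij : Function.Bijective Φ := by
    constructor
    · rintro ⟨⟨σ, hσ⟩, π⟩ ⟨⟨σ', hσ'⟩, π'⟩ h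
      have h' : Equiv.Perm.subtypeCongr (β₀.permCongr σ) π
          = Equiv.Perm.subtypeCongr (β₀.permCongr σ') π' := congrArg Subtype.val h
      have hσσ : σ = σ' := by
        apply β₀.permCongr.injective
        ext y
        have h2 := DFunLike.congr_fun h' (y : Fin n)
        simp only [Equiv.Perm.subtypeCongr.left_apply_subtype] at h2
        simp only [Equiv.permCongr_apply] at h2 ⊢
        exact congrArg Fin.val h2
      have hππ : π = π' := by
        ext y
        have h2 := DFunLike.congr_fun h' (y : Fin n)
        simp only [Equiv.Perm.subtypeCongr.right_apply_subtype] at h2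
        exact congrArg Fin.val h2
      simp [Prod.ext_iff, Subtype.ext_iff, hσσ, hππ]
    · rintro ⟨τ, hmem, β, σ, hσC, hβ⟩
      have hiff : ∀ x, x ∈ W ↔ τ x ∈ W := perm_mem_iff τ W hmem
      have hiff' : ∀ x, ¬ x ∈ W ↔ ¬ τ x ∈ W := fun x => not_congr (hiff x)
      set σT : Equiv.Perm (Fin d) := β₀.symm.permCongr (τ.subtypePerm (fun x => (hiff x).symm)) with hσT
      have hconj : σT = (β.trans β₀.symm) * σ * (β.trans β₀.symm)⁻¹ := by
        ext i
        simp only [hσT, Equiv.permCongr_apply, Equiv.symm_symm, Equiv.Perm.mul_apply,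
          Equiv.Perm.subtypePerm_apply, Equiv.Perm.inv_def, Equiv.symm_trans_apply,
          Equiv.trans_apply]
        refine congrArg Fin.val (congrArg β₀.symm (Subtype.ext ?_))
        rw [← hβ (β.symm (β₀ i))]
        simp
      have hσTC : σT ∈ C.carrier := by
        rw [ConjClasses.mem_carrier_iff_mk_eq] at hσC ⊢
        rw [← hσC]
        apply ConjClasses.mk_eq_mk_iff_isConj.mpr
        exact (isConj_iff.mpr ⟨β.trans β₀.symm, hconj.symm⟩).symm
      refine ⟨⟨⟨σT, hσTC⟩, τ.subtypePerm (fun x => (hiff' x).symm)⟩, ?_⟩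
      apply Subtype.ext
      simp only [Φ]
      ext x
      by_cases hx : x ∈ W
      · rw [Equiv.Perm.subtypeCongr.left_apply _ _ hx]
        simp [hσT]
      · rw [Equiv.Perm.subtypeCongr.right_apply _ _ hx]
        simp
  rw [← Nat.card_eq_of_bijective Φ hbij, Nat.card_prod, Nat.card_coe_set_eq]
  congr 1
  rw [Nat.card_eq_fintype_card, Fintype.card_perm, Fintype.card_subtype_compl]
  simp [Fintype.card_coe, hW]


/-- For a conjugacy class `C ⊆ S_d` and `n ≥ d`, the expected number over uniform
`τ ∈ S_n` of `d`-element subsets `W ⊆ {1,…,n}` with `τ(W) = W` and `τ|_W ∈ C`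
equals `|C| / d!`; in particular it is independent of `n`. -/
theorem stmt4 (d n : ℕ) (hdn : d ≤ n) (C : ConjClasses (Equiv.Perm (Fin d))) :
    (∑ τ : Equiv.Perm (Fin n),
        (Set.ncard {W : Finset (Fin n) | W.card = d ∧ (∀ i ∈ W, τ i ∈ W) ∧
            ∃ β : Fin d ≃ {x // x ∈ W}, ∃ σ : Equiv.Perm (Fin d), σ ∈ C.carrier ∧
              ∀ i : Fin d, τ (β i : Fin n) = (β (σ i) : Fin n)} : ℚ))
      / (Fintype.card (Equiv.Perm (Fin n)) : ℚ)
    = (C.carrier.ncard : ℚ) / (Nat.factorial d : ℚ) := by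
  classical
  set P : Equiv.Perm (Fin n) → Finset (Fin n) → Prop := fun τ W =>
    W.card = d ∧ (∀ i ∈ W, τ i ∈ W) ∧
      ∃ β : Fin d ≃ {x // x ∈ W}, ∃ σ : Equiv.Perm (Fin d), σ ∈ C.carrier ∧
        ∀ i : Fin d, τ (β i : Fin n) = (β (σ i) : Fin n) with hP
  have h1 : ∀ τ : Equiv.Perm (Fin n),
      Set.ncard {W : Finset (Fin n) | P τ W} = (Finset.univ.filter (P τ)).card := by
    intro τ
    rw [← Set.ncard_coe_finset]
    congr 1
    ext W
    simp
  -- total count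
  have h2 : ∑ τ : Equiv.Perm (Fin n), (Finset.univ.filter (P τ)).card
      = n.choose d * (C.carrier.ncard * (n - d).factorial) := by
    have hswap : ∑ τ : Equiv.Perm (Fin n), (Finset.univ.filter (P τ)).card
        = ∑ W : Finset (Fin n), (Finset.univ.filter (fun τ => P τ W)).card := by
      simp only [Finset.card_filter]
      exact Finset.sum_comm
    rw [hswap]
    have hW : ∀ W : Finset (Fin n), (Finset.univ.filter (fun τ => P τ W)).card
        = if W.card = d then C.carrier.ncard * (n - d).factorial else 0 := by
      intro W
      by_cases hWd : W.card = d
      · rw [if_pos hWd, ← count_eq d n C W hWd, Nat.card_eq_fintype_card,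
          Fintype.card_subtype]
        congr 1
        apply Finset.filter_congr
        intro τ _
        simp [hP, hWd]
      · rw [if_neg hWd]
        rw [Finset.card_eq_zero, Finset.filter_eq_empty_iff]
        intro τ _
        simp [hP, hWd]
    rw [Finset.sum_congr rfl (fun W _ => hW W), Finset.sum_ite, Finset.sum_const_zero,
      add_zero, Finset.sum_const, smul_eq_mul]
    congr 1
    have hc := Fintype.card_finset_len (α := Fin n) d
    rw [Fintype.card_subtype, Fintype.card_fin] at hc
    exact hc
  have hcast : (∑ τ : Equiv.Perm (Fin n),
      (Set.ncard {W : Finset (Fin n) | P τ W} : ℚ))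
      = ((n.choose d * (C.carrier.ncard * (n - d).factorial) : ℕ) : ℚ) := by
    rw [← h2]
    push_cast
    exact Finset.sum_congr rfl (fun τ _ => by rw [h1 τ])
  rw [hcast]
  have hfact : ((Fintype.card (Equiv.Perm (Fin n)) : ℚ)) = (n.factorial : ℚ) := by
    rw [Fintype.card_perm, Fintype.card_fin]
  rw [hfact]
  have hd : (d.factorial : ℚ) ≠ 0 := by positivity
  have hn : (n.factorial : ℚ) ≠ 0 := by positivity
  rw [div_eq_div_iff hn hd]
  have key : (n.choose d) * d.factorial * (n - d).factorial = n.factorial :=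
    Nat.choose_mul_factorial_mul_factorial hdn
  push_cast [← key]
  ring
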